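/- Let Φ = (G, φ) be any r-regular T-gain graph on n vertices with r > 0. Then E(Φ) ≥ n, with equality if and only if every connected component of Φ is switching equivalent to (K_{r,r}, 1). -/

import Mathlib

open Matrix BigOperators
open scoped Classical ComplexOrder

/-- A complex unit gain graph (`𝕋`-gain graph) on a finite vertex type `V`. -/
structure TGainGraph (V : Type*) [Fintype V] [DecidableEq V] where
  G : SimpleGraph V
  A : Matrix V V ℂ
  herm : A.IsHermitian
  unitGain : ∀ i j, G.Adj i j → ‖A i j‖ = 1
  zeroGain : ∀ i j, ¬ G.Adj i j → A i j = 0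

namespace TGainGraph

variable {V : Type*} [Fintype V] [DecidableEq V]

/-- The energy of a `𝕋`-gain graph: sum of absolute values of eigenvalues of `A(Φ)`. -/
noncomputable def energy (Φ : TGainGraph V) : ℝ :=
  ∑ i, |Φ.herm.eigenvalues i|

/-- `|A(Φ)| = (A(Φ) A(Φ)ᴴ)^{1/2}`. -/
noncomputable def absMatrix (Φ : TGainGraph V) : Matrix V V ℂ :=
  let hA := (Matrix.posSemidef_self_mul_conjTranspose Φ.A).isHermitian
  (hA.eigenvectorUnitary : Matrix V V ℂ) *
    diagonal ((↑) ∘ (√·) ∘ hA.eigenvalues) * (star hA.eigenvectorUnitary : Matrix V V ℂ)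

/-- Energy of a vertex: the `(i,i)` entry of `|A(Φ)|`. -/
noncomputable def vertexEnergy (Φ : TGainGraph V) (i : V) : ℝ :=
  (Φ.absMatrix i i).re

/-- Degree of a vertex in the underlying graph. -/
noncomputable def deg (Φ : TGainGraph V) (i : V) : ℕ := Φ.G.degree i

/-- Maximum vertex degree of the underlying graph. -/
noncomputable def maxDeg (Φ : TGainGraph V) : ℕ := Φ.G.maxDegree

/-- Spectral radius of `A(Φ)`. -/
noncomputable def specRadius (Φ : TGainGraph V) : ℝ :=
  ⨆ i, |Φ.herm.eigenvalues i|

/-- Switching equivalence of two gain graphs on the same vertex set: same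
underlying graph, and adjacency matrices conjugate by a diagonal unitary. -/
def SwitchEquiv (Φ₁ Φ₂ : TGainGraph V) : Prop :=
  Φ₁.G = Φ₂.G ∧ ∃ U : Matrix V V ℂ, U.IsDiag ∧ U ∈ Matrix.unitaryGroup V ℂ ∧
    Φ₁.A = U * Φ₂.A * Uᴴ

/-- `Φ` switches to the all-ones gain on its underlying graph,
i.e. `Φ ∼ (G, 1)` (equivalently, `Φ` is balanced). -/
def SwitchesToOne (Φ : TGainGraph V) : Prop :=
  ∃ U : Matrix V V ℂ, U.IsDiag ∧ U ∈ Matrix.unitaryGroup V ℂ ∧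
    Φ.A = U * (Φ.G.adjMatrix ℂ) * Uᴴ

/-- `Φ ∼ (K_{a,b}, 1)`: the underlying graph is (isomorphic to) the complete
bipartite graph `K_{a,b}` via some bijection `e`, and the gains switch to `1`. -/
def SwitchEquivToCompleteBipartite (Φ : TGainGraph V) (a b : ℕ) : Prop :=
  (∃ e : V ≃ (Fin a ⊕ Fin b), ∀ i j, Φ.G.Adj i j ↔
      (completeBipartiteGraph (Fin a) (Fin b)).Adj (e i) (e j)) ∧
  SwitchesToOne Φ

/-- The gain of a walk: the product of the gains of its edges in order. -/
noncomputable def walkGain (Φ : TGainGraph V) {u v : V} (w : Φ.G.Walk u v) : ℂ :=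
  (w.darts.map (fun d => Φ.A d.fst d.snd)).prod

/-- A gain graph is balanced if every cycle has gain `1`. -/
def Balanced (Φ : TGainGraph V) : Prop :=
  ∀ (u : V) (w : Φ.G.Walk u u), w.IsCycle → Φ.walkGain w = 1

/-- The restriction of a gain graph to a set of vertices. -/
noncomputable def restrict (Φ : TGainGraph V) (s : Set V) : TGainGraph s where
  G := Φ.G.induce s
  A := Φ.A.submatrix (Subtype.val) (Subtype.val)
  herm := Φ.herm.submatrix _
  unitGain := fun i j h => Φ.unitGain i j h
  zeroGain := fun i j h => Φ.zeroGain i j h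

/-- The vertex set of the connected component `c`. -/
def componentSet (Φ : TGainGraph V) (c : Φ.G.ConnectedComponent) : Set V :=
  {v | Φ.G.connectedComponentMk v = c}

/-- Every connected component of `Φ` is either an isolated vertex or a balanced
complete bipartite gain graph `(K_{k,k},1)` with a perfect matching. -/
def ComponentsBalancedCompleteBipartitePM (Φ : TGainGraph V) : Prop :=
  ∀ c : Φ.G.ConnectedComponent,
    (∀ v ∈ Φ.componentSet c, ∀ w, ¬ Φ.G.Adj v w) ∨
    ∃ k : ℕ, 0 < k ∧
      (Φ.restrict (Φ.componentSet c)).SwitchEquivToCompleteBipartite k k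

/-- The matching number of a graph. -/
noncomputable def matchingNumber (G : SimpleGraph V) : ℕ :=
  sSup {k | ∃ M : G.Subgraph, M.IsMatching ∧ M.edgeSet.ncard = k}

/-- The vertex cover number of a graph. -/
noncomputable def coverNumber (G : SimpleGraph V) : ℕ :=
  sInf {k | ∃ s : Finset V, s.card = k ∧ ∀ i j, G.Adj i j → i ∈ s ∨ j ∈ s}

/-- The number of odd cycles of a graph (counted by their edge sets). -/
noncomputable def oddCycleCount (G : SimpleGraph V) : ℕ :=
  Set.ncard {s : Set (Sym2 V) | ∃ (u : V) (w : G.Walk u u),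
    w.IsCycle ∧ Odd w.length ∧ s = {e | e ∈ w.edges}}

end TGainGraph

section Herm
variable {V : Type*} [Fintype V] [DecidableEq V] {A : Matrix V V ℂ} (hA : A.IsHermitian)

lemma herm_conj_mul (W : Matrix V V ℂ) (hWW : star W * W = 1) (M N : Matrix V V ℂ) :
    (W * M * star W) * (W * N * star W) = W * (M * N) * star W := by
  calc (W * M * star W) * (W * N * star W) = W * (M * ((star W * W) * (N * star W))) := by
        simp only [Matrix.mul_assoc]
    _ = W * (M * N) * star W := by rw [hWW]; simp only [Matrix.one_mul, Matrix.mul_assoc]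

lemma conj3 :
    A * A * A = (hA.eigenvectorUnitary : Matrix V V ℂ) *
      (Matrix.diagonal (RCLike.ofReal ∘ hA.eigenvalues) *
       Matrix.diagonal (RCLike.ofReal ∘ hA.eigenvalues) *
       Matrix.diagonal (RCLike.ofReal ∘ hA.eigenvalues)) *
      (star (hA.eigenvectorUnitary : Matrix V V ℂ)) := by
  set W : Matrix V V ℂ := (hA.eigenvectorUnitary : Matrix V V ℂ) with hW
  set D : Matrix V V ℂ := Matrix.diagonal (RCLike.ofReal ∘ hA.eigenvalues) with hD
  have hWW : star W * W = 1 := ((Unitary.mem_iff).mp (hA.eigenvectorUnitary).2).1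
  have hspec : A = W * D * star W := hA.spectral_theorem
  rw [hspec, herm_conj_mul W hWW, herm_conj_mul W hWW]

lemma conj2 :
    A * A = (hA.eigenvectorUnitary : Matrix V V ℂ) *
      (Matrix.diagonal (RCLike.ofReal ∘ hA.eigenvalues) *
       Matrix.diagonal (RCLike.ofReal ∘ hA.eigenvalues)) *
      (star (hA.eigenvectorUnitary : Matrix V V ℂ)) := by
  set W : Matrix V V ℂ := (hA.eigenvectorUnitary : Matrix V V ℂ) with hW
  set D : Matrix V V ℂ := Matrix.diagonal (RCLike.ofReal ∘ hA.eigenvalues) with hD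
  have hWW : star W * W = 1 := ((Unitary.mem_iff).mp (hA.eigenvectorUnitary).2).1
  have hspec : A = W * D * star W := hA.spectral_theorem
  rw [hspec, herm_conj_mul W hWW]

lemma trace_sq_eigen : (A * A).trace = ∑ i, (hA.eigenvalues i : ℂ)^2 := by
  rw [conj2 hA]
  set W : Matrix V V ℂ := (hA.eigenvectorUnitary : Matrix V V ℂ) with hW
  have hWW : star W * W = 1 := ((Unitary.mem_iff).mp (hA.eigenvectorUnitary).2).1
  rw [Matrix.trace_mul_cycle, ← Matrix.mul_assoc, hWW, Matrix.one_mul,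
    Matrix.diagonal_mul_diagonal, Matrix.trace_diagonal]
  simp [pow_two]

/-- eigenvalue cube identity implies matrix cube identity -/
lemma cube_matrix_of_eigen (c : ℝ) (h : ∀ i, hA.eigenvalues i ^ 3 = c * hA.eigenvalues i) :
    A * A * A = (c : ℂ) • A := by
  rw [conj3 hA]
  have hD3 : (Matrix.diagonal (RCLike.ofReal ∘ hA.eigenvalues) *
       Matrix.diagonal (RCLike.ofReal ∘ hA.eigenvalues) *
       Matrix.diagonal (RCLike.ofReal ∘ hA.eigenvalues) : Matrix V V ℂ)
      = (c:ℂ) • Matrix.diagonal (RCLike.ofReal ∘ hA.eigenvalues) := by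
    rw [Matrix.diagonal_mul_diagonal, Matrix.diagonal_mul_diagonal]
    rw [show ((c:ℂ) • Matrix.diagonal (RCLike.ofReal ∘ hA.eigenvalues) : Matrix V V ℂ)
        = Matrix.diagonal ((c:ℂ) • (RCLike.ofReal ∘ hA.eigenvalues)) by
      rw [Matrix.diagonal_smul]]
    apply congrArg Matrix.diagonal
    funext i
    have hrc : ∀ x:ℝ, (RCLike.ofReal x : ℂ) = (x:ℂ) := fun x => rfl
    have := h i
    simp only [Function.comp, Pi.smul_apply, Pi.mul_apply, smul_eq_mul, hrc]
    have h2 : ((hA.eigenvalues i ^3 : ℝ):ℂ) = ((c * hA.eigenvalues i : ℝ):ℂ) := by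
      exact_mod_cast congrArg (fun x:ℝ => (x:ℂ)) this
    push_cast at h2
    linear_combination h2
  rw [hD3]
  conv_rhs => rw [hA.spectral_theorem]
  simp only [Matrix.mul_smul, Matrix.smul_mul]
  rfl

/-- matrix cube identity implies eigenvalue cube identity -/
lemma eigen_cube_of_matrix (c : ℝ) (h : A * A * A = (c : ℂ) • A) (i : V) :
    hA.eigenvalues i ^ 3 = c * hA.eigenvalues i := by
  have hx := hA.mulVec_eigenvectorBasis i
  set x : V → ℂ := ⇑(hA.eigenvectorBasis i) with hxdef
  set lam : ℝ := hA.eigenvalues i with hlam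
  have hne : hA.eigenvectorBasis i ≠ 0 := hA.eigenvectorBasis.toBasis.ne_zero i
  have hxne : x ≠ 0 := by
    intro h0
    apply hne
    have h1 : hA.eigenvectorBasis i = ((hA.eigenvectorBasis i : EuclideanSpace ℂ V)) := rfl
    apply (WithLp.equiv 2 (V → ℂ)).injective
    simpa [hxdef] using h0
  have h3 : (A*A*A) *ᵥ x = lam • lam • lam • x := by
    rw [← Matrix.mulVec_mulVec, ← Matrix.mulVec_mulVec, hx, Matrix.mulVec_smul, hx,
      Matrix.mulVec_smul, Matrix.mulVec_smul, hx]
  rw [h, Matrix.smul_mulVec, hx] at h3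
  obtain ⟨j, hj⟩ : ∃ j, x j ≠ 0 := by
    by_contra hc
    push_neg at hc
    exact hxne (funext hc)
  have h5 := congr_fun h3 j
  simp only [Pi.smul_apply, smul_eq_mul, Complex.real_smul, Complex.smul_re] at h5
  have h6 : (c:ℂ) * ((lam:ℂ) * x j) = (lam:ℂ) * ((lam:ℂ) * ((lam:ℂ) * x j)) := h5
  have h7 : ((c * lam : ℝ) : ℂ) * x j = ((lam^3 : ℝ):ℂ) * x j := by
    push_cast; linear_combination h6
  have h8 : ((c * lam : ℝ) : ℂ) = ((lam^3 : ℝ):ℂ) := mul_right_cancel₀ hj h7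
  exact (Complex.ofReal_inj.mp h8).symm

end Herm
namespace TGainGraph
variable {V : Type*} [Fintype V] [DecidableEq V] (Φ : TGainGraph V) {r : ℕ}

lemma A_conj (i j : V) : Φ.A j i = (starRingEnd ℂ) (Φ.A i j) := by
  conv_lhs => rw [← Φ.herm]
  rw [Matrix.conjTranspose_apply]
  rfl

lemma sum_abs_row (hreg : ∀ v, Φ.deg v = r) (i : V) :
    ∑ j, ‖Φ.A i j‖ = r := by
  have h1 : ∀ j, ‖Φ.A i j‖ = if Φ.G.Adj i j then 1 else 0 := by
    intro j
    split_ifs with h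
    · exact Φ.unitGain i j h
    · rw [Φ.zeroGain i j h]; simp
  rw [Finset.sum_congr rfl fun j _ => h1 j]
  rw [Finset.sum_boole]
  have : (Finset.univ.filter (Φ.G.Adj i)).card = Φ.G.degree i := by
    rw [← SimpleGraph.neighborFinset_eq_filter]; rfl
  rw [this]
  have hd : Φ.G.degree i = r := hreg i
  rw [hd]

lemma sum_normSq_row (hreg : ∀ v, Φ.deg v = r) (i : V) :
    ∑ j, Complex.normSq (Φ.A i j) = r := by
  have h1 : ∀ j, Complex.normSq (Φ.A i j) = if Φ.G.Adj i j then 1 else 0 := by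
    intro j
    split_ifs with h
    · rw [← Complex.sq_norm, Φ.unitGain i j h]; norm_num
    · rw [Φ.zeroGain i j h]; simp
  rw [Finset.sum_congr rfl fun j _ => h1 j]
  rw [Finset.sum_boole]
  have : (Finset.univ.filter (Φ.G.Adj i)).card = Φ.G.degree i := by
    rw [← SimpleGraph.neighborFinset_eq_filter]; rfl
  rw [this]
  have hd : Φ.G.degree i = r := hreg i
  rw [hd]

lemma B_diag (hreg : ∀ v, Φ.deg v = r) (i : V) : (Φ.A * Φ.A) i i = (r:ℂ) := by
  rw [Matrix.mul_apply]
  have h1 : ∀ j, Φ.A i j * Φ.A j i = (Complex.normSq (Φ.A i j) : ℂ) := by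
    intro j
    rw [Φ.A_conj i j, Complex.mul_conj]
  rw [Finset.sum_congr rfl fun j _ => h1 j]
  rw [← Complex.ofReal_sum]
  rw [sum_normSq_row Φ hreg i]
  simp

lemma trace_sq_entries (hreg : ∀ v, Φ.deg v = r) :
    (Φ.A * Φ.A).trace = ((Fintype.card V : ℝ) * r : ℂ) := by
  rw [Matrix.trace]
  have : ∀ i, (Φ.A * Φ.A).diag i = (r:ℂ) := fun i => B_diag Φ hreg i
  rw [Finset.sum_congr rfl fun i _ => this i]
  simp [mul_comm]

lemma eigen_sq_sum (hreg : ∀ v, Φ.deg v = r) :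
    ∑ i, (Φ.herm.eigenvalues i)^2 = (Fintype.card V : ℝ) * r := by
  have h1 := trace_sq_eigen Φ.herm
  rw [trace_sq_entries Φ hreg] at h1
  have h2 : ((∑ i, (Φ.herm.eigenvalues i)^2 : ℝ) : ℂ) = (((Fintype.card V : ℝ) * r : ℝ) : ℂ) := by
    push_cast
    rw [← h1]
    push_cast
    ring
  exact_mod_cast h2

lemma eigen_abs_le (hreg : ∀ v, Φ.deg v = r) (i : V) :
    |Φ.herm.eigenvalues i| ≤ r := by
  have hx := Φ.herm.mulVec_eigenvectorBasis i
  set x : V → ℂ := ⇑(Φ.herm.eigenvectorBasis i) with hxdef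
  set lam : ℝ := Φ.herm.eigenvalues i with hlam
  have hne : Φ.herm.eigenvectorBasis i ≠ 0 := Φ.herm.eigenvectorBasis.toBasis.ne_zero i
  have hxne : x ≠ 0 := by
    intro h0
    apply hne
    apply (WithLp.equiv 2 (V → ℂ)).injective
    simpa [hxdef] using h0
  obtain ⟨j, -, hj⟩ := Finset.exists_max_image Finset.univ (fun k => ‖x k‖)
    ⟨i, Finset.mem_univ i⟩
  have hxj : 0 < ‖x j‖ := by
    rcases eq_or_lt_of_le (norm_nonneg (x j)) with h | h
    · exfalso
      apply hxne
      funext k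
      have := hj k (Finset.mem_univ k)
      have : ‖x k‖ ≤ 0 := le_trans this (le_of_eq h.symm)
      have := le_antisymm this (norm_nonneg _)
      simpa using this
    · exact h
  have hrow := congr_fun hx j
  have h2 : ‖(Φ.A *ᵥ x) j‖ = |lam| * ‖x j‖ := by
    rw [hrow, Pi.smul_apply, Complex.real_smul, norm_mul, Complex.norm_real, Real.norm_eq_abs]
  have h3 : ‖(Φ.A *ᵥ x) j‖ ≤ (r:ℝ) * ‖x j‖ := by
    rw [Matrix.mulVec, dotProduct]
    calc ‖∑ k, Φ.A j k * x k‖ ≤ ∑ k, ‖Φ.A j k * x k‖ :=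
          norm_sum_le _ _
      _ ≤ ∑ k, ‖Φ.A j k‖ * ‖x j‖ := by
          apply Finset.sum_le_sum
          intro k _
          rw [norm_mul]
          exact mul_le_mul_of_nonneg_left (hj k (Finset.mem_univ k)) (norm_nonneg _)
      _ = (∑ k, ‖Φ.A j k‖) * ‖x j‖ := by rw [Finset.sum_mul]
      _ = (r:ℝ) * ‖x j‖ := by rw [sum_abs_row Φ hreg j]
  rw [h2] at h3
  exact le_of_mul_le_mul_right h3 hxj

lemma energy_ge (hr : 0 < r) (hreg : ∀ v, Φ.deg v = r) :
    (Fintype.card V : ℝ) ≤ Φ.energy := by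
  have key : (Fintype.card V : ℝ) * r ≤ Φ.energy * r := by
    rw [← eigen_sq_sum Φ hreg]
    rw [energy, Finset.sum_mul]
    apply Finset.sum_le_sum
    intro i _
    have h1 := eigen_abs_le Φ hreg i
    calc (Φ.herm.eigenvalues i)^2 = |Φ.herm.eigenvalues i| * |Φ.herm.eigenvalues i| := by
          rw [← sq_abs]; ring
      _ ≤ |Φ.herm.eigenvalues i| * r := by
          exact mul_le_mul_of_nonneg_left h1 (abs_nonneg _)
  exact le_of_mul_le_mul_right key (by exact_mod_cast hr)

lemma energy_eq_iff_cube (hr : 0 < r) (hreg : ∀ v, Φ.deg v = r) :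
    Φ.energy = (Fintype.card V : ℝ) ↔
      ∀ i, Φ.herm.eigenvalues i ^ 3 = (r:ℝ)^2 * Φ.herm.eigenvalues i := by
  have hrR : (0:ℝ) < r := by exact_mod_cast hr
  constructor
  · intro h
    have hsum : ∑ i, ((r:ℝ) * |Φ.herm.eigenvalues i| - (Φ.herm.eigenvalues i)^2) = 0 := by
      rw [Finset.sum_sub_distrib, ← Finset.mul_sum]
      rw [eigen_sq_sum Φ hreg]
      rw [show (∑ i, |Φ.herm.eigenvalues i|) = Φ.energy from rfl, h]
      ring
    have hnn : ∀ i ∈ Finset.univ, (0:ℝ) ≤ (r:ℝ) * |Φ.herm.eigenvalues i| - (Φ.herm.eigenvalues i)^2 := by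
      intro i _
      have h1 := eigen_abs_le Φ hreg i
      have : (Φ.herm.eigenvalues i)^2 = |Φ.herm.eigenvalues i| * |Φ.herm.eigenvalues i| := by
        rw [← sq_abs]; ring
      nlinarith [abs_nonneg (Φ.herm.eigenvalues i)]
    have hzero := (Finset.sum_eq_zero_iff_of_nonneg hnn).mp hsum
    intro i
    have h0 := hzero i (Finset.mem_univ i)
    set lam := Φ.herm.eigenvalues i with hl
    have h1 : (r:ℝ) * |lam| = lam^2 := by linarith
    have h2 : |lam| * |lam| = lam^2 := by rw [abs_mul_abs_self]; ring
    rcases eq_or_ne lam 0 with h3 | h3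
    · rw [h3]; ring
    · have h4 : |lam| = r := by
        have h5 : |lam| ≠ 0 := abs_ne_zero.mpr h3
        apply mul_right_cancel₀ h5
        linarith
      have h6 : lam^2 = r^2 := by rw [← h1, h4]; ring
      calc lam^3 = lam * lam^2 := by ring
        _ = (r:ℝ)^2 * lam := by rw [h6]; ring
  · intro h
    have key : ∀ i, (r:ℝ) * |Φ.herm.eigenvalues i| = (Φ.herm.eigenvalues i)^2 := by
      intro i
      set lam := Φ.herm.eigenvalues i with hl
      have h1 := h i
      have h2 : lam * (lam^2 - r^2) = 0 := by linarith [h1]; 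
      rcases mul_eq_zero.mp h2 with h3 | h3
      · rw [h3]; simp
      · have h4 : lam^2 = r^2 := by linarith
        have h5 : |lam| = r := by
          have ha := abs_nonneg lam
          have h2' : |lam| * |lam| = lam ^ 2 := by rw [← sq_abs]; ring
          have hrn : (0:ℝ) ≤ r := Nat.cast_nonneg r
          nlinarith
        rw [h5, h4]; ring
    have : Φ.energy * r = (Fintype.card V : ℝ) * r := by
      rw [energy, Finset.sum_mul, ← eigen_sq_sum Φ hreg]
      apply Finset.sum_congr rfl
      intro i _
      rw [← key i]; ring
    exact mul_right_cancel₀ (ne_of_gt hrR) this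

end TGainGraph
namespace TGainGraph
variable {V : Type*} [Fintype V] [DecidableEq V] (Φ : TGainGraph V) {r : ℕ}

lemma B_herm_entry (k j : V) : (Φ.A * Φ.A) j k = (starRingEnd ℂ) ((Φ.A * Φ.A) k j) := by
  have hB : (Φ.A * Φ.A).IsHermitian := by
    have := Φ.herm
    unfold Matrix.IsHermitian at *
    rw [Matrix.conjTranspose_mul, this]
  conv_lhs => rw [← hB]
  rw [Matrix.conjTranspose_apply]
  rfl

lemma abs_A_le_one (i j : V) : ‖Φ.A i j‖ ≤ 1 := by
  by_cases h : Φ.G.Adj i j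
  · rw [Φ.unitGain i j h]
  · rw [Φ.zeroGain i j h]; simp

lemma key1 (hreg : ∀ v, Φ.deg v = r)
    (hA3 : Φ.A * Φ.A * Φ.A = ((r:ℂ)^2) • Φ.A)
    (i j k : V) (hij : Φ.G.Adj i j) (hik : Φ.G.Adj i k) :
    Φ.A i k * (Φ.A * Φ.A) k j = (r:ℂ) * Φ.A i j := by
  have hNcard : (Φ.G.neighborFinset i).card = r := hreg i
  have hmemN : ∀ {v}, v ∈ Φ.G.neighborFinset i ↔ Φ.G.Adj i v := by
    intro v; rw [SimpleGraph.mem_neighborFinset]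
  -- (c1) partial row sum equals full
  have c1 : ∑ k' ∈ Φ.G.neighborFinset i, Φ.A i k' * (Φ.A * Φ.A) k' j
      = (r:ℂ)^2 * Φ.A i j := by
    have hfull : ∑ k' : V, Φ.A i k' * (Φ.A * Φ.A) k' j = (Φ.A * (Φ.A * Φ.A)) i j :=
      (Matrix.mul_apply).symm
    have hAB : Φ.A * (Φ.A * Φ.A) = ((r:ℂ)^2) • Φ.A := by
      rw [← Matrix.mul_assoc]; exact hA3
    have h2 : ∑ k' : V, Φ.A i k' * (Φ.A * Φ.A) k' j = (r:ℂ)^2 * Φ.A i j := by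
      rw [hfull, hAB, Matrix.smul_apply, smul_eq_mul]
    rw [← h2]
    apply Finset.sum_subset (Finset.subset_univ _)
    intro x _ hx
    rw [Φ.zeroGain i x (fun hadj => hx (hmemN.mpr hadj))]
    ring
  -- (c2) sum of normSq of column of B
  have c2 : ∑ k' : V, Complex.normSq ((Φ.A * Φ.A) k' j) = (r:ℝ)^3 := by
    have hBB : (Φ.A * Φ.A) * (Φ.A * Φ.A) = ((r:ℂ)^2) • (Φ.A * Φ.A) := by
      rw [← Matrix.mul_assoc, hA3, Matrix.smul_mul]
    have hBjj : (Φ.A * Φ.A) j j = (r:ℂ) := B_diag Φ hreg j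
    have h1 : ((Φ.A * Φ.A) * (Φ.A * Φ.A)) j j = (r:ℂ)^3 := by
      rw [hBB, Matrix.smul_apply, smul_eq_mul, hBjj]; ring
    have h2 : ((Φ.A * Φ.A) * (Φ.A * Φ.A)) j j
        = ∑ k', ((Complex.normSq ((Φ.A * Φ.A) k' j) : ℝ) : ℂ) := by
      rw [Matrix.mul_apply]
      apply Finset.sum_congr rfl
      intro k' _
      rw [B_herm_entry Φ k' j, mul_comm, Complex.mul_conj]
    have h4 : (((r:ℝ)^3 : ℝ) : ℂ) = ((∑ k' : V, Complex.normSq ((Φ.A * Φ.A) k' j) : ℝ) : ℂ) := by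
      calc (((r:ℝ)^3 : ℝ) : ℂ) = (r:ℂ)^3 := by push_cast; ring
        _ = ((Φ.A * Φ.A) * (Φ.A * Φ.A)) j j := h1.symm
        _ = ∑ k', ((Complex.normSq ((Φ.A * Φ.A) k' j) : ℝ) : ℂ) := h2
        _ = ((∑ k' : V, Complex.normSq ((Φ.A * Φ.A) k' j) : ℝ) : ℂ) := by
            rw [Complex.ofReal_sum]
    exact_mod_cast h4.symm
  -- (c3)
  have hABij : Complex.normSq (Φ.A i j) = 1 := by
    rw [← Complex.sq_norm, Φ.unitGain i j hij]; norm_num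
  have c3 : ∑ k' ∈ Φ.G.neighborFinset i,
      Complex.normSq (Φ.A i k' * (Φ.A * Φ.A) k' j - (r:ℂ) * Φ.A i j) ≤ 0 := by
    have hexp : ∀ k' ∈ Φ.G.neighborFinset i,
        Complex.normSq (Φ.A i k' * (Φ.A * Φ.A) k' j - (r:ℂ) * Φ.A i j)
        = Complex.normSq ((Φ.A * Φ.A) k' j) + (r:ℝ)^2
          - 2 * ((Φ.A i k' * (Φ.A * Φ.A) k' j) * (starRingEnd ℂ) ((r:ℂ) * Φ.A i j)).re := by
      intro k' hk'
      rw [Complex.normSq_sub]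
      have h1 : Complex.normSq (Φ.A i k' * (Φ.A * Φ.A) k' j)
          = Complex.normSq ((Φ.A * Φ.A) k' j) := by
        rw [Complex.normSq_mul]
        have : Complex.normSq (Φ.A i k') = 1 := by
          rw [← Complex.sq_norm, Φ.unitGain i k' (hmemN.mp hk')]; norm_num
        rw [this, one_mul]
      have hnc : Complex.normSq ((r:ℂ)) = (r:ℝ)^2 := by
        rw [Complex.normSq_eq_norm_sq, Complex.norm_natCast]
      have h2 : Complex.normSq ((r:ℂ) * Φ.A i j) = (r:ℝ)^2 := by
        rw [Complex.normSq_mul, hABij, mul_one, hnc]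
      rw [h1, h2]
    rw [Finset.sum_congr rfl hexp, Finset.sum_sub_distrib, Finset.sum_add_distrib]
    have e1 : ∑ k' ∈ Φ.G.neighborFinset i, Complex.normSq ((Φ.A * Φ.A) k' j) ≤ (r:ℝ)^3 := by
      rw [← c2]
      apply Finset.sum_le_sum_of_subset_of_nonneg (Finset.subset_univ _)
      intro x _ _
      exact Complex.normSq_nonneg _
    have e2 : ∑ _k' ∈ Φ.G.neighborFinset i, (r:ℝ)^2 = (r:ℝ)^3 := by
      rw [Finset.sum_const, hNcard, nsmul_eq_mul]; ring
    have e3 : ∑ k' ∈ Φ.G.neighborFinset i,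
        2 * ((Φ.A i k' * (Φ.A * Φ.A) k' j) * (starRingEnd ℂ) ((r:ℂ) * Φ.A i j)).re
        = 2 * (r:ℝ)^3 := by
      rw [← Finset.mul_sum]
      congr 1
      have : ∑ k' ∈ Φ.G.neighborFinset i,
          ((Φ.A i k' * (Φ.A * Φ.A) k' j) * (starRingEnd ℂ) ((r:ℂ) * Φ.A i j)).re
          = ((∑ k' ∈ Φ.G.neighborFinset i, Φ.A i k' * (Φ.A * Φ.A) k' j)
              * (starRingEnd ℂ) ((r:ℂ) * Φ.A i j)).re := by
        rw [Finset.sum_mul, Complex.re_sum]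
      rw [this, c1]
      have hkey : ((r:ℂ)^2 * Φ.A i j) * (starRingEnd ℂ) ((r:ℂ) * Φ.A i j)
          = (r:ℂ)^3 * ((Complex.normSq (Φ.A i j) : ℝ) : ℂ) := by
        calc ((r:ℂ)^2 * Φ.A i j) * (starRingEnd ℂ) ((r:ℂ) * Φ.A i j)
            = (r:ℂ)^2 * (starRingEnd ℂ) ((r:ℂ)) * (Φ.A i j * (starRingEnd ℂ) (Φ.A i j)) := by
              rw [_root_.map_mul]; ring
          _ = (r:ℂ)^3 * ((Complex.normSq (Φ.A i j) : ℝ) : ℂ) := by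
              rw [Complex.mul_conj, map_natCast]; ring
      rw [hkey, hABij]
      rw [Complex.ofReal_one, mul_one]
      have hc : ((r:ℂ)^3) = (((r:ℝ)^3 : ℝ) : ℂ) := by push_cast; ring
      rw [hc, Complex.ofReal_re]
    rw [e2, e3]
    linarith [e1]
  -- conclude
  have hterm := (Finset.sum_eq_zero_iff_of_nonneg
    (fun k' _ => Complex.normSq_nonneg
      (Φ.A i k' * (Φ.A * Φ.A) k' j - (r:ℂ) * Φ.A i j))).mp
    (le_antisymm c3 (Finset.sum_nonneg fun k' _ => Complex.normSq_nonneg _))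
  have h0 := hterm k (hmemN.mpr hik)
  exact sub_eq_zero.mp (Complex.normSq_eq_zero.mp h0)

lemma key2 (hreg : ∀ v, Φ.deg v = r)
    (hA3 : Φ.A * Φ.A * Φ.A = ((r:ℂ)^2) • Φ.A)
    (i j k : V) (hij : Φ.G.Adj i j) (hik : Φ.G.Adj i k) :
    ∀ l, Φ.G.Adj k l → Φ.G.Adj j l := by
  intro l hkl
  have h1 := key1 Φ hreg hA3 i j k hij hik
  have habsB : ‖(Φ.A * Φ.A) k j‖ = r := by
    have := congrArg (‖·‖) h1
    rw [norm_mul, norm_mul, Φ.unitGain i k hik, Φ.unitGain i j hij, one_mul, mul_one] at this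
    rw [this]
    simp
  have hsum : ∑ l' ∈ Φ.G.neighborFinset k, Φ.A k l' * Φ.A l' j = (Φ.A * Φ.A) k j := by
    rw [Matrix.mul_apply]
    apply Finset.sum_subset (Finset.subset_univ _)
    intro x _ hx
    rw [Φ.zeroGain k x (fun hadj => hx ((SimpleGraph.mem_neighborFinset _ _ _).mpr hadj))]
    ring
  have hcard : (Φ.G.neighborFinset k).card = r := hreg k
  have hge : (r:ℝ) ≤ ∑ l' ∈ Φ.G.neighborFinset k, ‖Φ.A k l' * Φ.A l' j‖ := by
    calc (r:ℝ) = ‖(Φ.A * Φ.A) k j‖ := habsB.symm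
      _ = ‖∑ l' ∈ Φ.G.neighborFinset k, Φ.A k l' * Φ.A l' j‖ := by rw [hsum]
      _ ≤ ∑ l' ∈ Φ.G.neighborFinset k, ‖Φ.A k l' * Φ.A l' j‖ :=
          norm_sum_le _ _
  have hle1 : ∀ l' ∈ Φ.G.neighborFinset k, ‖Φ.A k l' * Φ.A l' j‖ ≤ 1 := by
    intro l' hl'
    rw [norm_mul, Φ.unitGain k l' ((SimpleGraph.mem_neighborFinset _ _ _).mp hl'), one_mul]
    exact abs_A_le_one Φ l' j
  have hzero : ∑ l' ∈ Φ.G.neighborFinset k,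
      (1 - ‖Φ.A k l' * Φ.A l' j‖) = 0 := by
    have hub : ∑ l' ∈ Φ.G.neighborFinset k,
        (1 - ‖Φ.A k l' * Φ.A l' j‖) ≤ 0 := by
      rw [Finset.sum_sub_distrib, Finset.sum_const, hcard, nsmul_eq_mul, mul_one]
      linarith [hge]
    have hlb : 0 ≤ ∑ l' ∈ Φ.G.neighborFinset k,
        (1 - ‖Φ.A k l' * Φ.A l' j‖) :=
      Finset.sum_nonneg fun l' hl' => by linarith [hle1 l' hl']
    linarith
  have hall := (Finset.sum_eq_zero_iff_of_nonneg
    (fun l' hl' => by linarith [hle1 l' hl'])).mp hzero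
  have h2 := hall l ((SimpleGraph.mem_neighborFinset _ _ _).mpr hkl)
  have h3 : ‖Φ.A l j‖ = 1 := by
    have := h2
    rw [norm_mul, Φ.unitGain k l hkl, one_mul] at this
    linarith
  have h4 : Φ.A l j ≠ 0 := by
    intro h0
    rw [h0] at h3
    simp at h3
  have h5 : Φ.G.Adj l j := by
    by_contra hc
    exact h4 (Φ.zeroGain l j hc)
  exact h5.symm

end TGainGraph
namespace TGainGraph
variable {V : Type*} [Fintype V] [DecidableEq V] (Φ : TGainGraph V) {r : ℕ}

lemma nbr_eq (hreg : ∀ v, Φ.deg v = r)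
    (hA3 : Φ.A * Φ.A * Φ.A = ((r:ℂ)^2) • Φ.A)
    {i j k : V} (hij : Φ.G.Adj i j) (hik : Φ.G.Adj i k) :
    Φ.G.neighborFinset j = Φ.G.neighborFinset k := by
  ext l
  rw [SimpleGraph.mem_neighborFinset, SimpleGraph.mem_neighborFinset]
  constructor
  · exact fun h => key2 Φ hreg hA3 i k j hik hij l h
  · exact fun h => key2 Φ hreg hA3 i j k hij hik l h

lemma union_closed_walk {G : SimpleGraph V} {Z W : Finset V}
    (hcl : ∀ x ∈ Z ∪ W, ∀ l, G.Adj x l → l ∈ Z ∪ W) :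
    ∀ {u w : V} (p : G.Walk u w), u ∈ Z ∪ W → w ∈ Z ∪ W := by
  intro u w p
  induction p with
  | nil => exact id
  | cons h _ ih => exact fun hu => ih (hcl _ hu _ h)

lemma components_of_cube (hr : 0 < r) (hreg : ∀ v, Φ.deg v = r)
    (hA3 : Φ.A * Φ.A * Φ.A = ((r:ℂ)^2) • Φ.A)
    (c : Φ.G.ConnectedComponent) :
    (Φ.restrict (Φ.componentSet c)).SwitchEquivToCompleteBipartite r r := by
  obtain ⟨v₀, hv₀⟩ := c.exists_rep
  subst hv₀
  have hdeg : ∀ v, (Φ.G.neighborFinset v).card = r := fun v => hreg v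
  have hne : (Φ.G.neighborFinset v₀).Nonempty := by
    rw [← Finset.card_pos, hdeg v₀]; exact hr
  obtain ⟨u₀, hu₀mem⟩ := hne
  have hadj₀ : Φ.G.Adj v₀ u₀ := (SimpleGraph.mem_neighborFinset _ _ _).mp hu₀mem
  set X := Φ.G.neighborFinset v₀ with hXdef
  set Y := Φ.G.neighborFinset u₀ with hYdef
  have hu₀X : u₀ ∈ X := hu₀mem
  have hv₀Y : v₀ ∈ Y := (SimpleGraph.mem_neighborFinset _ _ _).mpr hadj₀.symm
  have hXY : ∀ x ∈ X, Φ.G.neighborFinset x = Y := by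
    intro x hx
    exact nbr_eq Φ hreg hA3 ((SimpleGraph.mem_neighborFinset _ _ _).mp hx) hadj₀
  have hYX : ∀ y ∈ Y, Φ.G.neighborFinset y = X := by
    intro y hy
    exact nbr_eq Φ hreg hA3 ((SimpleGraph.mem_neighborFinset _ _ _).mp hy) hadj₀.symm
  have hdisj : ∀ v, v ∈ X → v ∈ Y → False := by
    intro w hwX hwY
    have h1 : Φ.G.neighborFinset w = Y := hXY w hwX
    have h2 : Φ.G.neighborFinset w = X := hYX w hwY
    have hXY' : X = Y := by rw [← h2, h1]
    have : v₀ ∈ X := by rw [hXY']; exact hv₀Y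
    have : Φ.G.Adj v₀ v₀ := (SimpleGraph.mem_neighborFinset _ _ _).mp this
    exact Φ.G.irrefl this
  -- membership in the component = X ∪ Y
  have hmemX : ∀ x ∈ X, Φ.G.connectedComponentMk x = Φ.G.connectedComponentMk v₀ :=
    fun x hx => SimpleGraph.ConnectedComponent.sound
      (((SimpleGraph.mem_neighborFinset _ _ _).mp hx).symm.reachable)
  have hmemY : ∀ y ∈ Y, Φ.G.connectedComponentMk y = Φ.G.connectedComponentMk v₀ := by
    intro y hy
    apply SimpleGraph.ConnectedComponent.sound
    exact (((SimpleGraph.mem_neighborFinset _ _ _).mp hy).symm.reachable).trans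
      hadj₀.symm.reachable
  have hcl : ∀ x ∈ X ∪ Y, ∀ l, Φ.G.Adj x l → l ∈ X ∪ Y := by
    intro x hx l hl
    rcases Finset.mem_union.mp hx with h | h
    · apply Finset.mem_union_right
      rw [← hXY x h]
      exact (SimpleGraph.mem_neighborFinset _ _ _).mpr hl
    · apply Finset.mem_union_left
      rw [← hYX x h]
      exact (SimpleGraph.mem_neighborFinset _ _ _).mpr hl
  have hcompsub : ∀ w, Φ.G.connectedComponentMk w = Φ.G.connectedComponentMk v₀ →
      w ∈ X ∪ Y := by
    intro w hw
    have hreach : Φ.G.Reachable v₀ w := (SimpleGraph.ConnectedComponent.exact hw).symm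
    obtain ⟨p⟩ := hreach
    exact union_closed_walk hcl p (Finset.mem_union_right _ hv₀Y)
  have hset : Φ.componentSet (Φ.G.connectedComponentMk v₀) = ((X ∪ Y : Finset V) : Set V) := by
    ext v
    constructor
    · intro hv
      exact Finset.mem_coe.mpr (hcompsub v hv)
    · intro hv
      rcases Finset.mem_union.mp (Finset.mem_coe.mp hv) with h | h
      · exact hmemX v h
      · exact hmemY v h
  -- adjacency characterization
  have hadj_iff : ∀ v w, v ∈ X ∪ Y → w ∈ X ∪ Y →
      (Φ.G.Adj v w ↔ (v ∈ X ∧ w ∈ Y) ∨ (v ∈ Y ∧ w ∈ X)) := by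
    intro v w hv hw
    constructor
    · intro hadj
      rcases Finset.mem_union.mp hv with h | h
      · left
        refine ⟨h, ?_⟩
        rw [← hXY v h]
        exact (SimpleGraph.mem_neighborFinset _ _ _).mpr hadj
      · right
        refine ⟨h, ?_⟩
        rw [← hYX v h]
        exact (SimpleGraph.mem_neighborFinset _ _ _).mpr hadj
    · intro h
      rcases h with ⟨hvX, hwY⟩ | ⟨hvY, hwX⟩
      · have : w ∈ Φ.G.neighborFinset v := by rw [hXY v hvX]; exact hwY
        exact (SimpleGraph.mem_neighborFinset _ _ _).mp this
      · have : w ∈ Φ.G.neighborFinset v := by rw [hYX v hvY]; exact hwX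
        exact (SimpleGraph.mem_neighborFinset _ _ _).mp this
  change (Φ.restrict (Φ.componentSet (Φ.G.connectedComponentMk v₀))).SwitchEquivToCompleteBipartite r r
  set s : Set V := Φ.componentSet (Φ.G.connectedComponentMk v₀) with hsdef
  have hmem_s_union : ∀ v : V, v ∈ s → v ∈ X ∪ Y := by
    intro v hv
    exact Finset.mem_coe.mp (hset ▸ hv)
  have hmem_union_s : ∀ v : V, v ∈ X ∪ Y → v ∈ s := by
    intro v hv
    rw [hset]
    exact Finset.mem_coe.mpr hv
  -- the equivalence
  let eSplit : s ≃ (↥X ⊕ ↥Y) :=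
    { toFun := fun a => if h : (a : V) ∈ X then Sum.inl ⟨a, h⟩ else Sum.inr ⟨a, by
        rcases Finset.mem_union.mp (hmem_s_union a a.2) with h' | h'
        · exact absurd h' h
        · exact h'⟩
      invFun := fun z => Sum.elim
        (fun x => (⟨x.1, hmem_union_s x.1 (Finset.mem_union_left _ x.2)⟩ : s))
        (fun y => (⟨y.1, hmem_union_s y.1 (Finset.mem_union_right _ y.2)⟩ : s)) z
      left_inv := by
        intro a
        by_cases h : (a : V) ∈ X <;> simp [h]
      right_inv := by
        rintro (x | y)
        · simp [x.2]
        · have hy : (y.1 : V) ∉ X := fun hc => hdisj y.1 hc y.2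
          simp [hy] }
  have heSplit_left : ∀ (a : s) (h : (a : V) ∈ X), eSplit a = Sum.inl ⟨a, h⟩ := by
    intro a h
    simp only [eSplit, Equiv.coe_fn_mk, dif_pos h]
  have heSplit_right : ∀ (a : s) (h : (a : V) ∉ X), (eSplit a).isRight := by
    intro a h
    simp only [eSplit, Equiv.coe_fn_mk, dif_neg h, Sum.isRight_inr]
  have hXcard : X.card = r := hdeg v₀
  have hYcard : Y.card = r := hdeg u₀
  let eX : ↥X ≃ Fin r := X.equivFinOfCardEq hXcard
  let eY : ↥Y ≃ Fin r := Y.equivFinOfCardEq hYcard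
  let e : s ≃ (Fin r ⊕ Fin r) := eSplit.trans (Equiv.sumCongr eX eY)
  -- gains
  set a : V → ℂ := fun x => Φ.A x v₀ with hadef
  set cf : V → ℂ := fun y => ((r:ℂ))⁻¹ * (Φ.A * Φ.A) v₀ y with hcfdef
  have hrne : ((r:ℂ)) ≠ 0 := by
    exact_mod_cast Nat.cast_ne_zero.mpr hr.ne'
  have hgain : ∀ x ∈ X, ∀ y ∈ Y, Φ.A x y = a x * cf y := by
    intro x hx y hy
    have hxy : Φ.G.Adj x y := (hadj_iff x y (Finset.mem_union_left _ hx)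
      (Finset.mem_union_right _ hy)).mpr (Or.inl ⟨hx, hy⟩)
    have hxv₀ : Φ.G.Adj x v₀ := ((SimpleGraph.mem_neighborFinset _ _ _).mp hx).symm
    have hk := key1 Φ hreg hA3 x y v₀ hxy hxv₀
    have hg : a x * cf y = (r:ℂ)⁻¹ * ((r:ℂ) * Φ.A x y) := by
      rw [hadef, hcfdef]
      dsimp only
      rw [← hk]
      ring
    rw [hg]
    field_simp
  have habs_a : ∀ x ∈ X, ‖a x‖ = 1 := by
    intro x hx
    exact Φ.unitGain x v₀ ((SimpleGraph.mem_neighborFinset _ _ _).mp hx).symm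
  have habs_c : ∀ y ∈ Y, ‖cf y‖ = 1 := by
    intro y hy
    have h1 := hgain u₀ hu₀X y hy
    have h2 : ‖Φ.A u₀ y‖ = 1 :=
      Φ.unitGain u₀ y ((SimpleGraph.mem_neighborFinset _ _ _).mp hy)
    have h3 := congrArg (‖·‖) h1
    rw [h2, norm_mul, habs_a u₀ hu₀X, one_mul] at h3
    exact h3.symm
  set w : V → ℂ := fun v => if v ∈ X then a v else
    if v ∈ Y then (starRingEnd ℂ) (cf v) else 1 with hwdef
  have habs_w : ∀ v ∈ X ∪ Y, ‖w v‖ = 1 := by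
    intro v hv
    rcases Finset.mem_union.mp hv with h | h
    · rw [hwdef]; simp only [if_pos h]; exact habs_a v h
    · have h' : v ∉ X := fun hc => hdisj v hc h
      rw [hwdef]; simp only [if_neg h', if_pos h, Complex.norm_conj]
      exact habs_c v h
  have hform : ∀ v v', v ∈ X ∪ Y → v' ∈ X ∪ Y →
      Φ.A v v' = w v * (if Φ.G.Adj v v' then 1 else 0) * (starRingEnd ℂ) (w v') := by
    intro v v' hv hv'
    rcases Finset.mem_union.mp hv with h | h <;> rcases Finset.mem_union.mp hv' with h' | h'
    · -- both in X : no edge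
      have hnadj : ¬ Φ.G.Adj v v' := by
        intro hc
        rcases (hadj_iff v v' hv hv').mp hc with ⟨_, h2⟩ | ⟨h1, _⟩
        · exact hdisj v' h' h2
        · exact hdisj v h h1
      rw [Φ.zeroGain v v' hnadj, if_neg hnadj]
      ring
    · -- v ∈ X, v' ∈ Y : edge
      have hadj : Φ.G.Adj v v' := (hadj_iff v v' hv hv').mpr (Or.inl ⟨h, h'⟩)
      have hv'nX : v' ∉ X := fun hc => hdisj v' hc h'
      rw [if_pos hadj, hgain v h v' h', hwdef]
      simp only [if_pos h, if_neg hv'nX, if_pos h']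
      rw [Complex.conj_conj]
      ring
    · -- v ∈ Y, v' ∈ X : edge
      have hadj : Φ.G.Adj v v' := (hadj_iff v v' hv hv').mpr (Or.inr ⟨h, h'⟩)
      have hvnX : v ∉ X := fun hc => hdisj v hc h
      have hAc : Φ.A v v' = (starRingEnd ℂ) (Φ.A v' v) := Φ.A_conj v' v
      rw [if_pos hadj, hAc, hgain v' h' v h, hwdef]
      simp only [if_pos h', if_neg hvnX, if_pos h]
      rw [_root_.map_mul]
      ring
    · -- both in Y : no edge
      have hnadj : ¬ Φ.G.Adj v v' := by
        intro hc
        rcases (hadj_iff v v' hv hv').mp hc with ⟨h1, _⟩ | ⟨_, h2⟩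
        · exact hdisj v h1 h
        · exact hdisj v' h2 h'
      rw [Φ.zeroGain v v' hnadj, if_neg hnadj]
      ring
  -- assemble
  constructor
  · -- graph iso to K_{r,r}
    refine ⟨e, ?_⟩
    intro i j
    have hi : (i : V) ∈ X ∪ Y := hmem_s_union i i.2
    have hj : (j : V) ∈ X ∪ Y := hmem_s_union j j.2
    change Φ.G.Adj (i : V) (j : V) ↔
      (completeBipartiteGraph (Fin r) (Fin r)).Adj (e i) (e j)
    rw [hadj_iff (i : V) (j : V) hi hj]
    by_cases hiX : (i : V) ∈ X <;> by_cases hjX : (j : V) ∈ X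
    · -- both X : left both sides false
      have h1 : e i = Sum.inl (eX ⟨i, hiX⟩) := by
        simp only [e, Equiv.trans_apply, heSplit_left i hiX, Equiv.sumCongr_apply,
          Sum.map_inl]
      have h2 : e j = Sum.inl (eX ⟨j, hjX⟩) := by
        simp only [e, Equiv.trans_apply, heSplit_left j hjX, Equiv.sumCongr_apply,
          Sum.map_inl]
      rw [h1, h2]
      constructor
      · rintro (⟨_, hY⟩ | ⟨hY, _⟩)
        · exact absurd hY (fun hc => hdisj (j:V) hjX hc)
        · exact absurd hY (fun hc => hdisj (i:V) hiX hc)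
      · intro hcb
        simp at hcb
    · have hjY : (j : V) ∈ Y := by
        rcases Finset.mem_union.mp hj with h | h
        · exact absurd h hjX
        · exact h
      have h1 : e i = Sum.inl (eX ⟨i, hiX⟩) := by
        simp only [e, Equiv.trans_apply, heSplit_left i hiX, Equiv.sumCongr_apply,
          Sum.map_inl]
      have h2 : e j = Sum.inr (eY ⟨j, hjY⟩) := by
        have := heSplit_right j hjX
        rcases hsr : eSplit j with z | z
        · rw [hsr] at this; simp at this
        · have hz : (z : V) = (j : V) := by
            have : eSplit j = Sum.inr z := hsr
            simp only [eSplit, Equiv.coe_fn_mk] at this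
            rw [dif_neg hjX] at this
            cases this
            rfl
          simp only [e, Equiv.trans_apply, hsr, Equiv.sumCongr_apply, Sum.map_inr]
          congr 1
          congr 1
          exact Subtype.ext hz
      rw [h1, h2]
      simp only [completeBipartiteGraph_adj, Sum.isLeft_inl, Sum.isRight_inr,
        Sum.isRight_inl, Sum.isLeft_inr]
      constructor
      · intro _; left; exact ⟨trivial, trivial⟩
      · intro _; left; exact ⟨hiX, hjY⟩
    · have hiY : (i : V) ∈ Y := by
        rcases Finset.mem_union.mp hi with h | h
        · exact absurd h hiX
        · exact h
      have h1 : e j = Sum.inl (eX ⟨j, hjX⟩) := by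
        simp only [e, Equiv.trans_apply, heSplit_left j hjX, Equiv.sumCongr_apply,
          Sum.map_inl]
      have h2 : (e i).isRight := by
        have := heSplit_right i hiX
        rcases hsr : eSplit i with z | z
        · rw [hsr] at this; simp at this
        · simp only [e, Equiv.trans_apply, hsr, Equiv.sumCongr_apply, Sum.map_inr,
            Sum.isRight_inr]
      rcases hei : e i with z | z
      · rw [hei] at h2; simp at h2
      · rw [h1]
        simp only [completeBipartiteGraph_adj, Sum.isLeft_inr, Sum.isRight_inl,
          Sum.isLeft_inl, Sum.isRight_inr]
        constructor
        · intro _; right; exact ⟨trivial, trivial⟩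
        · intro _; right; exact ⟨hiY, hjX⟩
    · -- both not X: both in Y
      have hiY : (i : V) ∈ Y := by
        rcases Finset.mem_union.mp hi with h | h
        · exact absurd h hiX
        · exact h
      have hjY : (j : V) ∈ Y := by
        rcases Finset.mem_union.mp hj with h | h
        · exact absurd h hjX
        · exact h
      have h2i : (e i).isRight := by
        have := heSplit_right i hiX
        rcases hsr : eSplit i with z | z
        · rw [hsr] at this; simp at this
        · simp only [e, Equiv.trans_apply, hsr, Equiv.sumCongr_apply, Sum.map_inr,
            Sum.isRight_inr]
      have h2j : (e j).isRight := by
        have := heSplit_right j hjX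
        rcases hsr : eSplit j with z | z
        · rw [hsr] at this; simp at this
        · simp only [e, Equiv.trans_apply, hsr, Equiv.sumCongr_apply, Sum.map_inr,
            Sum.isRight_inr]
      rcases hei : e i with z | z
      · rw [hei] at h2i; simp at h2i
      rcases hej : e j with z' | z'
      · rw [hej] at h2j; simp at h2j
      simp only [completeBipartiteGraph_adj, Sum.isLeft_inr, Sum.isRight_inr]
      constructor
      · rintro (⟨hx, _⟩ | ⟨_, hx⟩)
        · exact absurd hx hiX
        · exact absurd hx hjX
      · intro hcb
        simp at hcb
  · -- SwitchesToOne
    refine ⟨Matrix.diagonal (fun i : s => w (i : V)), Matrix.isDiag_diagonal _, ?_, ?_⟩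
    · rw [Matrix.mem_unitaryGroup_iff]
      rw [Matrix.star_eq_conjTranspose, Matrix.diagonal_conjTranspose]
      rw [Matrix.diagonal_mul_diagonal]
      ext i j
      by_cases hij : i = j
      · subst hij
        rw [Matrix.diagonal_apply_eq, Matrix.one_apply_eq]
        show w (i:V) * star (w (i:V)) = 1
        have h1 : ‖w (i:V)‖ = 1 := habs_w (i:V) (hmem_s_union i i.2)
        rw [RCLike.star_def, Complex.mul_conj, ← Complex.sq_norm, h1]
        norm_num
      · rw [Matrix.diagonal_apply_ne _ hij, Matrix.one_apply_ne hij]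
    · ext i j
      have hAdj : (Φ.restrict s).G.Adj i j ↔ Φ.G.Adj (i:V) (j:V) := Iff.rfl
      have hmain : Φ.A (i:V) (j:V) =
          (Matrix.diagonal (fun i : s => w (i : V)) * ((Φ.restrict s).G.adjMatrix ℂ) *
            (Matrix.diagonal (fun i : s => w (i : V)))ᴴ) i j := by
        rw [Matrix.diagonal_conjTranspose]
        rw [Matrix.mul_diagonal, Matrix.diagonal_mul]
        rw [SimpleGraph.adjMatrix_apply]
        rw [Pi.star_apply, RCLike.star_def]
        have hite : (if (Φ.restrict s).G.Adj i j then (1:ℂ) else 0)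
            = (if Φ.G.Adj (i:V) (j:V) then (1:ℂ) else 0) := if_congr hAdj rfl rfl
        rw [hite]
        exact hform (i:V) (j:V) (hmem_s_union i i.2) (hmem_s_union j j.2)
      exact hmain

end TGainGraph
namespace TGainGraph
variable {V : Type*} [Fintype V] [DecidableEq V] (Φ : TGainGraph V) {r : ℕ}

lemma cbg_adj_iff {a b : ℕ} (x y : Fin a ⊕ Fin b) :
    (completeBipartiteGraph (Fin a) (Fin b)).Adj x y ↔ x.isLeft ≠ y.isLeft := by
  rcases x with x | x <;> rcases y with y | y <;> simp

lemma diag_conj_entry {n : Type*} [Fintype n] [DecidableEq n]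
    (U M : Matrix n n ℂ) (hU : U.IsDiag) (a b : n) :
    (U * M * Uᴴ) a b = U a a * M a b * (starRingEnd ℂ) (U b b) := by
  calc (U * M * Uᴴ) a b
      = (Matrix.diagonal U.diag * M * (Matrix.diagonal U.diag)ᴴ) a b := by
        rw [hU.diagonal_diag]
    _ = U.diag a * M a b * star (U.diag b) := by
        rw [Matrix.diagonal_conjTranspose, Matrix.mul_diagonal, Matrix.diagonal_mul,
          Pi.star_apply]
    _ = U a a * M a b * (starRingEnd ℂ) (U b b) := by
        rw [RCLike.star_def]; rfl

lemma diag_unitary_abs {n : Type*} [Fintype n] [DecidableEq n]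
    (U : Matrix n n ℂ) (hU : U.IsDiag) (hmem : U ∈ Matrix.unitaryGroup n ℂ) (a : n) :
    ‖U a a‖ = 1 := by
  have h1 : U * star U = 1 := (Matrix.mem_unitaryGroup_iff).mp hmem
  have h2 : (U * star U) a a = 1 := by rw [h1]; exact Matrix.one_apply_eq a
  rw [Matrix.star_eq_conjTranspose, Matrix.mul_apply] at h2
  have h3 : ∀ k ∈ Finset.univ, k ≠ a → U a k * Uᴴ k a = 0 := by
    intro k _ hk
    rw [hU (Ne.symm hk)]
    ring
  rw [Finset.sum_eq_single a (fun k _ hk => h3 k (Finset.mem_univ k) hk)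
    (fun h => absurd (Finset.mem_univ a) h)] at h2
  rw [Matrix.conjTranspose_apply] at h2
  have h4 : Complex.normSq (U a a) = 1 := by
    have : U a a * star (U a a) = ((Complex.normSq (U a a) : ℝ) : ℂ) := Complex.mul_conj _
    rw [this] at h2
    exact_mod_cast h2
  rw [← Complex.sq_norm] at h4
  nlinarith [norm_nonneg (U a a)]

lemma cube_of_components (hreg : ∀ v, Φ.deg v = r)
    (H : ∀ c : Φ.G.ConnectedComponent,
      (Φ.restrict (Φ.componentSet c)).SwitchEquivToCompleteBipartite r r) :
    Φ.A * Φ.A * Φ.A = ((r:ℂ)^2) • Φ.A := by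
  -- extract data per component, as total functions
  have H' : ∀ c : Φ.G.ConnectedComponent, ∃ (sd : V → Bool) (u : V → ℂ),
      (∀ v, v ∈ Φ.componentSet c → ‖u v‖ = 1) ∧
      (∀ v w, v ∈ Φ.componentSet c → w ∈ Φ.componentSet c →
        (Φ.G.Adj v w ↔ sd v ≠ sd w)) ∧
      (∀ v w, v ∈ Φ.componentSet c → w ∈ Φ.componentSet c →
        Φ.A v w = u v * (if Φ.G.Adj v w then 1 else 0) * (starRingEnd ℂ) (u w)) := by
    intro c
    obtain ⟨⟨e, he⟩, U, hUdiag, hUmem, hUeq⟩ := H c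
    refine ⟨fun v => if h : v ∈ Φ.componentSet c then (e ⟨v, h⟩).isLeft else false,
      fun v => if h : v ∈ Φ.componentSet c then U ⟨v, h⟩ ⟨v, h⟩ else 1, ?_, ?_, ?_⟩
    · intro v hv
      dsimp only
      rw [dif_pos hv]
      exact diag_unitary_abs U hUdiag hUmem _
    · intro v w hv hw
      dsimp only
      rw [dif_pos hv, dif_pos hw]
      have h1 := he ⟨v, hv⟩ ⟨w, hw⟩
      have h2 : (Φ.restrict (Φ.componentSet c)).G.Adj ⟨v, hv⟩ ⟨w, hw⟩ ↔ Φ.G.Adj v w :=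
        Iff.rfl
      rw [h2] at h1
      rw [h1, cbg_adj_iff]
    · intro v w hv hw
      have h1 : (Φ.restrict (Φ.componentSet c)).A ⟨v, hv⟩ ⟨w, hw⟩ = Φ.A v w := rfl
      have h2 := congrFun (congrFun hUeq ⟨v, hv⟩) ⟨w, hw⟩
      rw [h1] at h2
      have hM : (SimpleGraph.adjMatrix ℂ (Φ.restrict (Φ.componentSet c)).G) ⟨v, hv⟩ ⟨w, hw⟩
          = (if Φ.G.Adj v w then (1:ℂ) else 0) := by
        rw [SimpleGraph.adjMatrix_apply]
        exact if_congr Iff.rfl rfl rfl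
      rw [h2, diag_conj_entry _ _ hUdiag, hM]
      dsimp only
      rw [dif_pos hv, dif_pos hw]
  choose sd u habs hadj hgain using H'
  set side : V → Bool := fun v => sd (Φ.G.connectedComponentMk v) v with hside
  set uu : V → ℂ := fun v => u (Φ.G.connectedComponentMk v) v with huu
  have hmk : ∀ v : V, v ∈ Φ.componentSet (Φ.G.connectedComponentMk v) := fun v => rfl
  have hmk' : ∀ {v w : V}, Φ.G.connectedComponentMk w = Φ.G.connectedComponentMk v →
      w ∈ Φ.componentSet (Φ.G.connectedComponentMk v) := fun h => h
  have hAdjSame : ∀ {v w : V}, Φ.G.Adj v w →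
      Φ.G.connectedComponentMk v = Φ.G.connectedComponentMk w :=
    fun h => SimpleGraph.ConnectedComponent.sound h.reachable
  have L2 : ∀ v w, Φ.G.Adj v w → Φ.A v w = uu v * (starRingEnd ℂ) (uu w) := by
    intro v w h
    have hc : Φ.G.connectedComponentMk w = Φ.G.connectedComponentMk v := (hAdjSame h).symm
    have h1 := hgain (Φ.G.connectedComponentMk v) v w (hmk v) (hmk' hc)
    rw [if_pos h, mul_one] at h1
    rw [h1, huu]
    dsimp only
    rw [hc]
  have L3 : ∀ v, (starRingEnd ℂ) (uu v) * uu v = 1 := by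
    intro v
    have h1 : ‖uu v‖ = 1 := habs (Φ.G.connectedComponentMk v) v (hmk v)
    have h2 : (starRingEnd ℂ) (uu v) * uu v = ((Complex.normSq (uu v) : ℝ) : ℂ) := by
      rw [mul_comm]; exact Complex.mul_conj _
    rw [h2, ← Complex.sq_norm, h1]
    norm_num
  have L4 : ∀ v w, Φ.G.connectedComponentMk v = Φ.G.connectedComponentMk w →
      (Φ.G.Adj v w ↔ side v ≠ side w) := by
    intro v w h
    have h1 := hadj (Φ.G.connectedComponentMk v) v w (hmk v) (hmk' h.symm)
    rw [h1, hside]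
    dsimp only
    rw [h.symm]
  -- parity lemmas
  have bool1 : ∀ a b c d : Bool, a ≠ b → b ≠ c → c ≠ d → a ≠ d := by decide
  have bool2 : ∀ a b c d : Bool, a ≠ b → a ≠ c → c ≠ d → d ≠ b := by decide
  have par1 : ∀ i k l j, Φ.G.Adj i k → Φ.G.Adj k l → Φ.G.Adj l j → Φ.G.Adj i j := by
    intro i k l j h1 h2 h3
    have hc1 := hAdjSame h1
    have hc2 := hAdjSame h2
    have hc3 := hAdjSame h3
    have hcij : Φ.G.connectedComponentMk i = Φ.G.connectedComponentMk j := by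
      rw [hc1, hc2, hc3]
    refine (L4 i j hcij).mpr ?_
    have s1 := (L4 i k hc1).mp h1
    have s2 := (L4 k l hc2).mp h2
    have s3 := (L4 l j hc3).mp h3
    exact bool1 _ _ _ _ s1 s2 s3
  have par2 : ∀ i j k l, Φ.G.Adj i j → Φ.G.Adj i k → Φ.G.Adj k l → Φ.G.Adj l j := by
    intro i j k l h1 h2 h3
    have hc1 := hAdjSame h1
    have hc2 := hAdjSame h2
    have hc3 := hAdjSame h3
    have hclj : Φ.G.connectedComponentMk l = Φ.G.connectedComponentMk j := by
      rw [← hc3, ← hc2, hc1]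
    refine (L4 l j hclj).mpr ?_
    have s1 := (L4 i j hc1).mp h1
    have s2 := (L4 i k hc2).mp h2
    have s3 := (L4 k l hc3).mp h3
    exact bool2 _ _ _ _ s1 s2 s3
  -- main computation
  ext i j
  rw [Matrix.smul_apply, smul_eq_mul]
  have expand : (Φ.A * Φ.A * Φ.A) i j = ∑ l, ∑ k, Φ.A i k * Φ.A k l * Φ.A l j := by
    rw [Matrix.mul_apply]
    apply Finset.sum_congr rfl
    intro l _
    rw [Matrix.mul_apply, Finset.sum_mul]
  have hterm : ∀ l k, Φ.A i k * Φ.A k l * Φ.A l j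
      = (if Φ.G.Adj i k ∧ Φ.G.Adj k l then (1:ℂ) else 0) * Φ.A i j := by
    intro l k
    by_cases h1 : Φ.G.Adj i k
    · by_cases h2 : Φ.G.Adj k l
      · rw [if_pos ⟨h1, h2⟩, one_mul]
        by_cases h3 : Φ.G.Adj i j
        · have h4 : Φ.G.Adj l j := par2 i j k l h3 h1 h2
          rw [L2 i k h1, L2 k l h2, L2 l j h4, L2 i j h3]
          calc (uu i * (starRingEnd ℂ) (uu k)) * (uu k * (starRingEnd ℂ) (uu l))
                * (uu l * (starRingEnd ℂ) (uu j))
              = (uu i * (starRingEnd ℂ) (uu j)) * (((starRingEnd ℂ) (uu k) * uu k)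
                * ((starRingEnd ℂ) (uu l) * uu l)) := by ring
            _ = uu i * (starRingEnd ℂ) (uu j) := by rw [L3 k, L3 l]; ring
        · have h4 : ¬ Φ.G.Adj l j := fun h4 => h3 (par1 i k l j h1 h2 h4)
          rw [Φ.zeroGain l j h4, Φ.zeroGain i j h3]
          ring
      · rw [if_neg (fun hc => h2 hc.2), Φ.zeroGain k l h2]
        ring
    · rw [if_neg (fun hc => h1 hc.1), Φ.zeroGain i k h1]
      ring
  have hcount : ∑ l : V, ∑ k : V, (if Φ.G.Adj i k ∧ Φ.G.Adj k l then (1:ℂ) else 0)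
      = (r:ℂ)^2 := by
    rw [Finset.sum_comm]
    have hin : ∀ k : V, ∑ l : V, (if Φ.G.Adj i k ∧ Φ.G.Adj k l then (1:ℂ) else 0)
        = if Φ.G.Adj i k then (r:ℂ) else 0 := by
      intro k
      by_cases h : Φ.G.Adj i k
      · simp only [h, true_and, if_pos]
        rw [Finset.sum_boole]
        have : (Finset.univ.filter (Φ.G.Adj k)).card = Φ.G.degree k := by
          rw [← SimpleGraph.neighborFinset_eq_filter]; rfl
        rw [this]
        have hd : Φ.G.degree k = r := hreg k
        rw [hd]
      · simp [h]
    rw [Finset.sum_congr rfl (fun k _ => hin k)]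
    have : ∀ k : V, (if Φ.G.Adj i k then (r:ℂ) else 0)
        = (r:ℂ) * (if Φ.G.Adj i k then (1:ℂ) else 0) := by
      intro k; split_ifs <;> ring
    rw [Finset.sum_congr rfl (fun k _ => this k), ← Finset.mul_sum]
    rw [Finset.sum_boole]
    have h2 : (Finset.univ.filter (Φ.G.Adj i)).card = Φ.G.degree i := by
      rw [← SimpleGraph.neighborFinset_eq_filter]; rfl
    rw [h2]
    have hd : Φ.G.degree i = r := hreg i
    rw [hd]
    ring
  rw [expand]
  rw [Finset.sum_congr rfl (fun l _ => Finset.sum_congr rfl (fun k _ => hterm l k))]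
  rw [Finset.sum_congr rfl (fun l _ => (Finset.sum_mul _ _ (Φ.A i j)).symm), ← Finset.sum_mul]
  rw [hcount]

end TGainGraph

open TGainGraph in
/-- For an `r`-regular gain graph on `n` vertices with `r > 0`, `E(Φ) ≥ n`, with
equality iff every connected component is switching equivalent to `(K_{r,r},1)`. -/
theorem card_le_energy_of_regular {V : Type*} [Fintype V] [DecidableEq V]
    (Φ : TGainGraph V) (r : ℕ) (hr : 0 < r) (hreg : ∀ v, Φ.deg v = r) :
    (Fintype.card V : ℝ) ≤ Φ.energy ∧
    (Φ.energy = (Fintype.card V : ℝ) ↔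
      ∀ c : Φ.G.ConnectedComponent,
        (Φ.restrict (Φ.componentSet c)).SwitchEquivToCompleteBipartite r r) := by
  have hcast : ((((r:ℝ)^2 : ℝ)) : ℂ) = ((r:ℂ)^2) := by push_cast; ring
  have hA3iff : Φ.energy = (Fintype.card V : ℝ) ↔
      Φ.A * Φ.A * Φ.A = ((r:ℂ)^2) • Φ.A := by
    rw [energy_eq_iff_cube Φ hr hreg]
    constructor
    · intro h
      have h1 := cube_matrix_of_eigen Φ.herm ((r:ℝ)^2) h
      rw [hcast] at h1
      exact h1
    · intro h i
      apply eigen_cube_of_matrix Φ.herm ((r:ℝ)^2) _ i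
      rw [h, hcast]
  refine ⟨energy_ge Φ hr hreg, ?_, ?_⟩
  · intro h
    exact components_of_cube Φ hr hreg (hA3iff.mp h)
  · intro H
    exact hA3iff.mpr (cube_of_components Φ hreg H)
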